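/- For η = 0 and (δT,δX) ∈ ℕ², the minimum distance of the code C_0(δT,δX) equals d_0(δT,δX) = max(q−δX+1, 1)·max(q−δT+1, 1). -/

import Mathlib

open MvPolynomial

attribute [local instance] Classical.propDecidable

namespace Hirz

/-- Index type for the `(q+1)²` rational points of the Hirzebruch surface. -/
abbrev HIdx (F : Type) := (F × F) ⊕ F ⊕ F ⊕ Unit

variable (F : Type) [Field F] [Fintype F]

/-- The homogeneous coordinates of the rational points of `H_η`. -/
def pt : HIdx F → Fin 4 → F
  | Sum.inl (a, b) => ![1, a, 1, b]
  | Sum.inr (Sum.inl b) => ![0, 1, 1, b]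
  | Sum.inr (Sum.inr (Sum.inl a)) => ![1, a, 0, 1]
  | Sum.inr (Sum.inr (Sum.inr _)) => ![0, 1, 0, 1]

/-- Evaluation of a polynomial at all the rational points. -/
noncomputable def ev (P : MvPolynomial (Fin 4) F) : HIdx F → F :=
  fun i => eval (pt F i) P

/-- `c` is the exponent vector (T1,T2,X1,X2) of a monomial of bidegree `(δT, δX)`. -/
def IsBideg (η : ℕ) (δT : ℤ) (δX : ℕ) (c : Fin 4 → ℕ) : Prop :=
  (c 0 : ℤ) + (c 1 : ℤ) - (η : ℤ) * (c 2 : ℤ) = δT ∧ c 2 + c 3 = δX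

/-- The monomial with exponent vector `c`. -/
noncomputable def mon (c : Fin 4 → ℕ) : MvPolynomial (Fin 4) F :=
  monomial (Finsupp.equivFunOnFinite.symm c) (1 : F)

/-- The set of monomials of bidegree `(δT, δX)`. -/
def MSet (η : ℕ) (δT : ℤ) (δX : ℕ) : Set (MvPolynomial (Fin 4) F) :=
  {P | ∃ c : Fin 4 → ℕ, IsBideg η δT δX c ∧ P = mon F c}

/-- `R(δT,δX)`, the space of homogeneous polynomials of bidegree `(δT,δX)`. -/
noncomputable def RSpan (η : ℕ) (δT : ℤ) (δX : ℕ) : Submodule F (MvPolynomial (Fin 4) F) :=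
  Submodule.span F (MSet F η δT δX)

/-- The code `C_η(δT,δX)`, image of `R(δT,δX)` under evaluation. -/
noncomputable def Code (η : ℕ) (δT : ℤ) (δX : ℕ) : Submodule F (HIdx F → F) :=
  Submodule.span F (ev F '' MSet F η δT δX)

/-- Hamming weight. -/
noncomputable def wt (v : HIdx F → F) : ℕ := {i | v i ≠ 0}.ncard

/-- Minimum distance of `C_η(δT,δX)`. -/
noncomputable def dmin (η : ℕ) (δT : ℤ) (δX : ℕ) : ℕ :=
  sInf {w : ℕ | ∃ v ∈ Code F η δT δX, v ≠ 0 ∧ wt F v = w}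

/-- `⌊A⌋` where `A = δX` if `δT ≥ 0` and `A = δ/η` otherwise. -/
def Afloor (η : ℕ) (δT : ℤ) (δX : ℕ) : ℤ :=
  if 0 ≤ δT then (δX : ℤ) else (δT + (η : ℤ) * (δX : ℤ)) / (η : ℤ)

/-- Exponent vector of the monomial `M(d2,c2)`. -/
def Mexp (η : ℕ) (δT : ℤ) (δX : ℕ) (d2 c2 : ℕ) : Fin 4 → ℕ :=
  ![(δT + (η : ℤ) * ((δX : ℤ) - (d2 : ℤ)) - (c2 : ℤ)).toNat, c2, δX - d2, d2]

/-- The monomial `M(d2,c2) = T1^(δT+η(δX-d2)-c2) T2^c2 X1^(δX-d2) X2^d2`. -/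
noncomputable def Mmon (η : ℕ) (δT : ℤ) (δX : ℕ) (d2 c2 : ℕ) : MvPolynomial (Fin 4) F :=
  mon F (Mexp η δT δX d2 c2)

/-- The lattice polygon `P(δT,δX)`. -/
def PSet (η : ℕ) (δT : ℤ) (δX : ℕ) : Set (ℕ × ℕ) :=
  {p | (p.1 : ℤ) ≤ Afloor η δT δX ∧ (p.2 : ℤ) ≤ δT + (η : ℤ) * ((δX : ℤ) - (p.1 : ℤ))}

/-- The set `A_X = {α : α ≤ min(⌊A⌋, q-1)} ∪ ({A} ∩ ℕ)`. -/
def AX (η : ℕ) (δT : ℤ) (δX : ℕ) (q : ℕ) : Set ℕ :=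
  {α | (α : ℤ) ≤ min (Afloor η δT δX) ((q : ℤ) - 1)} ∪
    {α | if 0 ≤ δT then (α : ℤ) = (δX : ℤ)
         else (α : ℤ) * (η : ℤ) = δT + (η : ℤ) * (δX : ℤ)}

/-- The set of representatives `K(δT,δX)`. -/
def KSet (η : ℕ) (δT : ℤ) (δX : ℕ) (q : ℕ) : Set (ℕ × ℕ) :=
  {p | p.1 ∈ AX η δT δX q ∧
    ((p.2 : ℤ) ≤ min (δT + (η : ℤ) * (δX : ℤ) - (η : ℤ) * (p.1 : ℤ)) (q : ℤ) - 1 ∨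
      (p.2 : ℤ) = δT + (η : ℤ) * (δX : ℤ) - (η : ℤ) * (p.1 : ℤ))}

/-- Condition (H): `η ≥ 2`, `δT < 0`, `η ∣ δT` and `q ≤ δX + δT/η`. -/
def CondH (η : ℕ) (δT : ℤ) (δX : ℕ) (q : ℕ) : Prop :=
  2 ≤ η ∧ δT < 0 ∧ (η : ℤ) ∣ δT ∧ (q : ℤ) ≤ (δX : ℤ) + δT / (η : ℤ)

/-- `K*(δT,δX)`: `K(δT,δX)` minus `(δ/η, 0)` if (H) holds. -/
def KStar (η : ℕ) (δT : ℤ) (δX : ℕ) (q : ℕ) : Set (ℕ × ℕ) :=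
  if CondH η δT δX q then
    KSet η δT δX q \ {(((δT + (η : ℤ) * (δX : ℤ)) / (η : ℤ)).toNat, 0)}
  else KSet η δT δX q

/-- `Δ*(δT,δX) = {M(α,β) : (α,β) ∈ K*(δT,δX)}`. -/
noncomputable def DeltaStar (η : ℕ) (δT : ℤ) (δX : ℕ) (q : ℕ) :
    Set (MvPolynomial (Fin 4) F) :=
  {P | ∃ p ∈ KStar η δT δX q, P = Mmon F η δT δX p.1 p.2}


/-! ### Auxiliary machinery for statement 14 (η = 0) -/

section Aux

open Polynomial Finset

/-- Projective-line evaluation of the `i`-th basis monomial of degree `d`. -/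
def pw (d : ℕ) (t : F ⊕ Unit) (i : Fin (d + 1)) : F :=
  match t with
  | Sum.inl a => a ^ (i : ℕ)
  | Sum.inr _ => if (i : ℕ) = d then 1 else 0

/-- Evaluation of a coefficient matrix on the product of two projective lines. -/
noncomputable def psi (δT δX : ℕ) (c : Fin (δT + 1) × Fin (δX + 1) → F) (t s : F ⊕ Unit) : F :=
  ∑ p : Fin (δT + 1) × Fin (δX + 1), c p * pw F δT t p.1 * pw F δX s p.2

def toProd : HIdx F → (F ⊕ Unit) × (F ⊕ Unit)
  | Sum.inl (a, b) => (Sum.inl a, Sum.inl b)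
  | Sum.inr (Sum.inl b) => (Sum.inr (), Sum.inl b)
  | Sum.inr (Sum.inr (Sum.inl a)) => (Sum.inl a, Sum.inr ())
  | Sum.inr (Sum.inr (Sum.inr _)) => (Sum.inr (), Sum.inr ())

def ofProd : (F ⊕ Unit) × (F ⊕ Unit) → HIdx F
  | (Sum.inl a, Sum.inl b) => Sum.inl (a, b)
  | (Sum.inr _, Sum.inl b) => Sum.inr (Sum.inl b)
  | (Sum.inl a, Sum.inr _) => Sum.inr (Sum.inr (Sum.inl a))
  | (Sum.inr _, Sum.inr _) => Sum.inr (Sum.inr (Sum.inr ()))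

def eProd : HIdx F ≃ (F ⊕ Unit) × (F ⊕ Unit) where
  toFun := toProd F
  invFun := ofProd F
  left_inv := by rintro (⟨a, b⟩ | b | a | ⟨⟩) <;> rfl
  right_inv := by rintro ⟨(a | ⟨⟩), (b | ⟨⟩)⟩ <;> rfl

lemma sum_pw_inl (d : ℕ) (u : Fin (d + 1) → F) (a : F) :
    (∑ i, u i * pw F d (Sum.inl a) i) = ∑ i : Fin (d + 1), u i * a ^ (i : ℕ) := by
  simp [pw]

lemma sum_pw_inr (d : ℕ) (u : Fin (d + 1) → F) (x : Unit) :
    (∑ i, u i * pw F d (Sum.inr x) i) = u (Fin.last d) := by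
  have h : ∀ i : Fin (d + 1), u i * pw F d (Sum.inr x) i
      = if i = Fin.last d then u i else 0 := by
    intro i
    have : ((i : ℕ) = d) = (i = Fin.last d) := by
      rw [Fin.ext_iff, Fin.val_last]
    simp [pw, this, mul_ite]
  rw [Finset.sum_congr rfl fun i _ => h i, Finset.sum_ite_eq' univ (Fin.last d) u]
  simp

lemma sum_coeff_pw_inl (d : ℕ) (p : Polynomial F) (hdeg : p.natDegree ≤ d) (a : F) :
    (∑ i : Fin (d + 1), p.coeff (i : ℕ) * pw F d (Sum.inl a) i) = p.eval a := by
  rw [sum_pw_inl, Fin.sum_univ_eq_sum_range (fun i => p.coeff i * a ^ i) (d + 1)]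
  rw [Polynomial.eval_eq_sum_range' (n := d + 1) (by omega) a]

lemma card_filter_sum {α β : Type*} [Fintype α] [Fintype β] (p : α ⊕ β → Prop)
    [DecidablePred p] [DecidablePred (fun a => p (Sum.inl a))]
    [DecidablePred (fun b => p (Sum.inr b))] :
    (univ.filter p).card
      = (univ.filter fun a => p (Sum.inl a)).card
        + (univ.filter fun b => p (Sum.inr b)).card := by
  classical
  rw [← Finset.card_disjSum]
  congr 1
  ext x
  cases x <;> simp

/-- Lower bound for the weight of a nonzero projective Reed–Solomon word. -/
lemma rs_card_lb (d : ℕ) (u : Fin (d + 1) → F)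
    (h : ∃ s, (∑ i, u i * pw F d s i) ≠ 0) :
    max (Fintype.card F + 1 - d) 1
      ≤ (univ.filter fun s : F ⊕ Unit => (∑ i, u i * pw F d s i) ≠ 0).card := by
  classical
  set q := Fintype.card F with hq
  set p : Polynomial F := ∑ i : Fin (d + 1), Polynomial.C (u i) * Polynomial.X ^ (i : ℕ) with hp
  have hcu : ∀ i : Fin (d + 1), p.coeff i = u i := by
    intro i
    rw [hp, Polynomial.finset_sum_coeff]
    simp only [Polynomial.coeff_C_mul, Polynomial.coeff_X_pow]
    have h : ∀ j : Fin (d + 1), u j * (if (i : ℕ) = (j : ℕ) then (1 : F) else 0)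
        = if j = i then u j else 0 := by
      intro j
      have : ((i : ℕ) = (j : ℕ)) = (j = i) := by
        rw [Fin.ext_iff]; exact propext eq_comm
      simp [this, mul_ite]
    rw [Finset.sum_congr rfl fun j _ => h j, Finset.sum_ite_eq' univ i u]
    simp
  have hcoeff : p.coeff d = u (Fin.last d) := hcu (Fin.last d)
  have hdeg : p.natDegree ≤ d := by
    rw [hp]
    refine natDegree_sum_le_of_forall_le _ _ fun i _ => ?_
    refine le_trans (natDegree_C_mul_le _ _) ?_
    simpa [natDegree_X_pow] using Nat.le_of_lt_succ i.isLt
  have hev : ∀ a : F, (∑ i, u i * pw F d (Sum.inl a) i) = p.eval a := by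
    intro a
    rw [← sum_coeff_pw_inl F d p hdeg a]
    exact Finset.sum_congr rfl fun i _ => by rw [hcu i]
  obtain ⟨s0, hs0⟩ := h
  have hpne : p ≠ 0 := by
    intro h0
    cases s0 with
    | inl a => rw [hev a, h0] at hs0; simp at hs0
    | inr x => rw [sum_pw_inr, ← hcoeff, h0] at hs0; simp at hs0
  set Z := univ.filter fun a : F => p.eval a = 0 with hZdef
  have hZcard : Z.card ≤ p.natDegree := by
    refine le_trans (Finset.card_le_card ?_)
      (le_trans (Multiset.toFinset_card_le _) p.card_roots')
    intro a ha
    rw [hZdef, mem_filter] at ha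
    rw [Multiset.mem_toFinset, Polynomial.mem_roots']
    exact ⟨hpne, ha.2⟩
  have hsplit := card_filter_sum (α := F) (β := Unit)
    (fun s => (∑ i, u i * pw F d s i) ≠ 0)
  beta_reduce at hsplit
  have hA : (univ.filter fun a : F => (∑ i, u i * pw F d (Sum.inl a) i) ≠ 0).card
      + Z.card = q := by
    rw [hZdef]
    have heq : (univ.filter fun a : F => (∑ i, u i * pw F d (Sum.inl a) i) ≠ 0)
        = univ.filter fun a : F => ¬ p.eval a = 0 := by
      apply Finset.filter_congr
      intro a _
      rw [hev a]
    rw [heq, add_comm, Finset.card_filter_add_card_filter_not, Finset.card_univ]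
  have hW1 : 1 ≤ (univ.filter fun s : F ⊕ Unit => (∑ i, u i * pw F d s i) ≠ 0).card := by
    refine Finset.card_pos.mpr ⟨s0, ?_⟩
    rw [mem_filter]
    exact ⟨mem_univ _, hs0⟩
  by_cases hc : p.coeff d = 0
  · have hne : p.natDegree ≠ d := by
      intro he
      have hl := Polynomial.leadingCoeff_ne_zero.mpr hpne
      rw [Polynomial.leadingCoeff, he] at hl
      exact hl hc
    omega
  · have hB : (univ.filter fun b : Unit =>
        (∑ i, u i * pw F d (Sum.inr b) i) ≠ 0).card = 1 := by
      have heq : (univ.filter fun b : Unit =>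
          (∑ i, u i * pw F d (Sum.inr b) i) ≠ 0) = univ := by
        refine Finset.filter_true_of_mem fun b _ => ?_
        rw [sum_pw_inr, ← hcoeff]
        exact hc
      rw [heq]
      rfl
    omega

/-- Existence of a projective Reed–Solomon word of minimal weight. -/
lemma rs_exact (d : ℕ) : ∃ u : Fin (d + 1) → F,
    (univ.filter fun s : F ⊕ Unit => (∑ i, u i * pw F d s i) ≠ 0).card
      = max (Fintype.card F + 1 - d) 1 := by
  classical
  set q := Fintype.card F with hq
  by_cases hdq : d ≤ q
  · obtain ⟨S, -, hScard⟩ := Finset.exists_subset_card_eq (s := (univ : Finset F)) (n := d)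
      (by rw [Finset.card_univ]; exact hdq)
    set p : Polynomial F := ∏ a ∈ S, (Polynomial.X - Polynomial.C a) with hp
    have hmon : p.Monic := monic_prod_of_monic _ _ fun a _ => monic_X_sub_C a
    have hdeg : p.natDegree = d := by
      rw [hp, natDegree_prod_of_monic _ _ fun a _ => monic_X_sub_C a]
      simp [hScard]
    refine ⟨fun i => p.coeff (i : ℕ), ?_⟩
    beta_reduce
    rw [card_filter_sum (α := F) (β := Unit)
      (fun s => (∑ i : Fin (d + 1), p.coeff (i : ℕ) * pw F d s i) ≠ 0)]
    have hZ : (univ.filter fun a : F => (∑ i : Fin (d + 1), p.coeff (i : ℕ) * pw F d (Sum.inl a) i) ≠ 0)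
        = univ \ S := by
      ext a
      rw [mem_filter, Finset.mem_sdiff]
      simp only [mem_univ, true_and]
      rw [sum_coeff_pw_inl F d p (le_of_eq hdeg) a, hp, Polynomial.eval_prod]
      simp only [Polynomial.eval_sub, Polynomial.eval_X, Polynomial.eval_C]
      rw [Finset.prod_ne_zero_iff]
      constructor
      · intro h hmem
        exact absurd (by simp) (h a hmem)
      · intro h b hb hzero
        rw [sub_eq_zero] at hzero
        exact h (hzero ▸ hb)
    have hU : (univ.filter fun b : Unit =>
        (∑ i : Fin (d + 1), p.coeff (i : ℕ) * pw F d (Sum.inr b) i) ≠ 0) = univ := by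
      refine Finset.filter_true_of_mem fun b _ => ?_
      rw [sum_pw_inr (u := fun i : Fin (d+1) => p.coeff (i : ℕ))]
      have hl := hmon.coeff_natDegree
      rw [hdeg] at hl
      simp only [Fin.val_last]
      rw [hl]
      exact one_ne_zero
    rw [hZ, hU, Finset.card_sdiff_of_subset (Finset.subset_univ S), Finset.card_univ, hScard]
    have h1 : (univ : Finset Unit).card = 1 := rfl
    rw [h1]
    omega
  · set p : Polynomial F := Polynomial.X ^ (d - q) * ∏ a ∈ (univ : Finset F), (Polynomial.X - Polynomial.C a) with hp
    have hmonP : (∏ a ∈ (univ : Finset F), (Polynomial.X - Polynomial.C a) : Polynomial F).Monic :=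
      monic_prod_of_monic _ _ fun a _ => monic_X_sub_C a
    have hmon : p.Monic := (monic_X_pow _).mul hmonP
    have hdeg : p.natDegree = d := by
      rw [hp, (monic_X_pow _).natDegree_mul hmonP, natDegree_X_pow,
        natDegree_prod_of_monic _ _ fun a _ => monic_X_sub_C a]
      simp only [natDegree_X_sub_C, Finset.sum_const, smul_eq_mul, mul_one, Finset.card_univ]
      omega
    refine ⟨fun i => p.coeff (i : ℕ), ?_⟩
    beta_reduce
    rw [card_filter_sum (α := F) (β := Unit)
      (fun s => (∑ i : Fin (d + 1), p.coeff (i : ℕ) * pw F d s i) ≠ 0)]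
    have hZ : (univ.filter fun a : F => (∑ i : Fin (d + 1), p.coeff (i : ℕ) * pw F d (Sum.inl a) i) ≠ 0)
        = (∅ : Finset F) := by
      refine Finset.filter_false_of_mem fun a _ => ?_
      rw [sum_coeff_pw_inl F d p (le_of_eq hdeg) a, hp, Polynomial.eval_mul,
        Polynomial.eval_prod]
      push_neg
      apply mul_eq_zero_of_right
      refine Finset.prod_eq_zero (mem_univ a) ?_
      simp
    have hU : (univ.filter fun b : Unit =>
        (∑ i : Fin (d + 1), p.coeff (i : ℕ) * pw F d (Sum.inr b) i) ≠ 0) = univ := by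
      refine Finset.filter_true_of_mem fun b _ => ?_
      rw [sum_pw_inr (u := fun i : Fin (d+1) => p.coeff (i : ℕ))]
      have hl := hmon.coeff_natDegree
      rw [hdeg] at hl
      simp only [Fin.val_last]
      rw [hl]
      exact one_ne_zero
    rw [hZ, hU, Finset.card_empty]
    have h1 : (univ : Finset Unit).card = 1 := rfl
    rw [h1]
    omega

end Aux

/-! ### Two-variable layer -/

section Aux2

open Finset

lemma ev_mon (c : Fin 4 → ℕ) (idx : HIdx F) :
    ev F (mon F c) idx = ∏ k : Fin 4, pt F idx k ^ c k := by
  rw [ev, mon, MvPolynomial.eval_monomial]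
  rw [Finsupp.prod_fintype _ _ fun i => pow_zero _]
  simp

lemma ev_mexp (δT δX : ℕ) (i : Fin (δT + 1)) (j : Fin (δX + 1)) (idx : HIdx F) :
    ev F (mon F ![δT - (i : ℕ), (i : ℕ), δX - (j : ℕ), (j : ℕ)]) idx
      = pw F δT (toProd F idx).1 i * pw F δX (toProd F idx).2 j := by
  have hi : ((δT - (i : ℕ) = 0)) = ((i : ℕ) = δT) := by
    have := i.isLt
    apply propext
    omega
  have hj : ((δX - (j : ℕ) = 0)) = ((j : ℕ) = δX) := by
    have := j.isLt
    apply propext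
    omega
  rw [ev_mon]
  rcases idx with ⟨a, b⟩ | b | a | x <;>
    simp [pt, toProd, pw, Fin.prod_univ_four, zero_pow_eq, hi, hj]

/-- Evaluation, as a linear map on coefficient matrices. -/
noncomputable def Psi (δT δX : ℕ) :
    (Fin (δT + 1) × Fin (δX + 1) → F) →ₗ[F] (HIdx F → F) where
  toFun c := fun idx => psi F δT δX c (toProd F idx).1 (toProd F idx).2
  map_add' c c' := by
    funext idx
    simp [psi, add_mul, Finset.sum_add_distrib]
  map_smul' r c := by
    funext idx
    simp [psi, Finset.mul_sum, mul_assoc]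

@[simp] lemma Psi_apply (δT δX : ℕ) (c : Fin (δT + 1) × Fin (δX + 1) → F) (idx : HIdx F) :
    Psi F δT δX c idx = psi F δT δX c (toProd F idx).1 (toProd F idx).2 := rfl

lemma psi_single (δT δX : ℕ) (p0 : Fin (δT + 1) × Fin (δX + 1)) (t s : F ⊕ Unit) :
    psi F δT δX (Pi.single p0 (1 : F)) t s = pw F δT t p0.1 * pw F δX s p0.2 := by
  rw [psi, Finset.sum_eq_single p0]
  · simp
  · intro b _ hb
    simp [Pi.single_apply, hb]
  · intro h
    exact absurd (Finset.mem_univ _) h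

lemma Psi_mem_code (δT δX : ℕ) (c : Fin (δT + 1) × Fin (δX + 1) → F) :
    (Psi F δT δX c : HIdx F → F) ∈ Code F 0 (δT : ℤ) δX := by
  have hrep : (Psi F δT δX c : HIdx F → F)
      = ∑ p : Fin (δT + 1) × Fin (δX + 1),
          c p • ev F (mon F ![δT - (p.1 : ℕ), (p.1 : ℕ), δX - (p.2 : ℕ), (p.2 : ℕ)]) := by
    funext idx
    rw [Finset.sum_apply]
    simp only [Pi.smul_apply, smul_eq_mul, ev_mexp]
    rw [Psi_apply, psi]
    exact Finset.sum_congr rfl fun p _ => by ring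
  rw [hrep]
  refine Submodule.sum_mem _ fun p _ => Submodule.smul_mem _ _ ?_
  refine Submodule.subset_span
    ⟨_, ⟨![δT - (p.1 : ℕ), (p.1 : ℕ), δX - (p.2 : ℕ), (p.2 : ℕ)], ?_, rfl⟩, rfl⟩
  have h1 := p.1.isLt
  have h2 := p.2.isLt
  constructor <;> simp [IsBideg] <;> omega

lemma code_mem_range (δT δX : ℕ) (v : HIdx F → F) (hv : v ∈ Code F 0 (δT : ℤ) δX) :
    ∃ c : Fin (δT + 1) × Fin (δX + 1) → F, v = Psi F δT δX c := by
  have hle : Code F 0 (δT : ℤ) δX ≤ LinearMap.range (Psi F δT δX) := by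
    rw [Code]
    refine Submodule.span_le.mpr ?_
    rintro w ⟨P, ⟨cc, hbid, rfl⟩, rfl⟩
    obtain ⟨h0, h1⟩ := hbid
    simp only [Nat.cast_zero, zero_mul, sub_zero] at h0
    have hcc1 : cc 1 ≤ δT := by omega
    have hcc3 : cc 3 ≤ δX := by omega
    refine ⟨Pi.single (⟨cc 1, by omega⟩, ⟨cc 3, by omega⟩) (1 : F), ?_⟩
    funext idx
    rw [Psi_apply, psi_single]
    have hme := ev_mexp F δT δX ⟨cc 1, by omega⟩ ⟨cc 3, by omega⟩ idx
    rw [← hme]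
    show ev F (mon F ![δT - cc 1, cc 1, δX - cc 3, cc 3]) idx = ev F (mon F cc) idx
    have hveq : cc = ![δT - cc 1, cc 1, δX - cc 3, cc 3] := by
      funext k
      fin_cases k <;> simp <;> omega
    conv_rhs => rw [hveq]
  obtain ⟨c, hc⟩ := hle hv
  exact ⟨c, hc.symm⟩

lemma wt_eq_card (g : (F ⊕ Unit) → (F ⊕ Unit) → F) :
    wt F (fun idx => g (toProd F idx).1 (toProd F idx).2)
      = (univ.filter fun p : (F ⊕ Unit) × (F ⊕ Unit) => g p.1 p.2 ≠ 0).card := by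
  classical
  rw [wt]
  have h1 : {i : HIdx F | g (toProd F i).1 (toProd F i).2 ≠ 0}
      = eProd F ⁻¹' {p : (F ⊕ Unit) × (F ⊕ Unit) | g p.1 p.2 ≠ 0} := rfl
  rw [h1, ← Equiv.image_symm_eq_preimage,
    Set.ncard_image_of_injective _ (eProd F).symm.injective]
  rw [Set.ncard_eq_toFinset_card']
  simp [Set.toFinset_setOf]

lemma psi_col (δT δX : ℕ) (c : Fin (δT + 1) × Fin (δX + 1) → F) (t s : F ⊕ Unit) :
    psi F δT δX c t s
      = ∑ j : Fin (δX + 1), (∑ i : Fin (δT + 1), c (i, j) * pw F δT t i) * pw F δX s j := by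
  unfold psi
  rw [Fintype.sum_prod_type, Finset.sum_comm]
  dsimp only
  refine Finset.sum_congr rfl fun j _ => ?_
  rw [Finset.sum_mul]

lemma psi_row (δT δX : ℕ) (c : Fin (δT + 1) × Fin (δX + 1) → F) (t s : F ⊕ Unit) :
    psi F δT δX c t s
      = ∑ i : Fin (δT + 1), (∑ j : Fin (δX + 1), c (i, j) * pw F δX s j) * pw F δT t i := by
  unfold psi
  rw [Fintype.sum_prod_type]
  dsimp only
  refine Finset.sum_congr rfl fun i _ => ?_
  rw [Finset.sum_mul]
  exact Finset.sum_congr rfl fun j _ => by ring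

lemma code_wt_lb (δT δX : ℕ) (v : HIdx F → F) (hv : v ∈ Code F 0 (δT : ℤ) δX)
    (hv0 : v ≠ 0) :
    max (Fintype.card F + 1 - δX) 1 * max (Fintype.card F + 1 - δT) 1 ≤ wt F v := by
  classical
  obtain ⟨c, rfl⟩ := code_mem_range F δT δX v hv
  rw [show (Psi F δT δX c : HIdx F → F)
      = fun idx => psi F δT δX c (toProd F idx).1 (toProd F idx).2 from rfl]
  rw [wt_eq_card]
  have hex : ∃ t s, psi F δT δX c t s ≠ 0 := by
    by_contra hno
    push_neg at hno
    exact hv0 (funext fun idx => hno _ _)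
  obtain ⟨t0, s0, hts⟩ := hex
  obtain ⟨uc, huc⟩ : ∃ uc : Fin (δX + 1) → F,
      ∀ s, psi F δT δX c t0 s = ∑ j, uc j * pw F δX s j :=
    ⟨fun j => ∑ i : Fin (δT + 1), c (i, j) * pw F δT t0 i, fun s => by rw [psi_col]⟩
  have hScard : max (Fintype.card F + 1 - δX) 1
      ≤ (univ.filter fun s : F ⊕ Unit => psi F δT δX c t0 s ≠ 0).card := by
    refine le_trans (rs_card_lb F δX uc ⟨s0, by rw [← huc]; exact hts⟩)
      (Finset.card_le_card ?_)
    intro s hsm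
    rw [Finset.mem_filter] at hsm ⊢
    exact ⟨hsm.1, by rw [huc]; exact hsm.2⟩
  have hrow : ∀ s : F ⊕ Unit, psi F δT δX c t0 s ≠ 0 →
      max (Fintype.card F + 1 - δT) 1
        ≤ (univ.filter fun t : F ⊕ Unit => psi F δT δX c t s ≠ 0).card := by
    intro s hs
    obtain ⟨ur, hur⟩ : ∃ ur : Fin (δT + 1) → F,
        ∀ t, psi F δT δX c t s = ∑ i, ur i * pw F δT t i :=
      ⟨fun i => ∑ j : Fin (δX + 1), c (i, j) * pw F δX s j, fun t => by rw [psi_row]⟩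
    refine le_trans (rs_card_lb F δT ur ⟨t0, by rw [← hur]; exact hs⟩)
      (Finset.card_le_card ?_)
    intro t htm
    rw [Finset.mem_filter] at htm ⊢
    exact ⟨htm.1, by rw [hur]; exact htm.2⟩
  have himg : ∀ s : F ⊕ Unit,
      ((univ.filter fun t : F ⊕ Unit => psi F δT δX c t s ≠ 0).image fun t => (t, s)).card
        = (univ.filter fun t : F ⊕ Unit => psi F δT δX c t s ≠ 0).card :=
    fun s => Finset.card_image_of_injective _
      (fun a b hab => by simpa using congrArg Prod.fst hab)
  have hdisj : ∀ s1 ∈ (univ.filter fun s : F ⊕ Unit => psi F δT δX c t0 s ≠ 0),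
      ∀ s2 ∈ (univ.filter fun s : F ⊕ Unit => psi F δT δX c t0 s ≠ 0), s1 ≠ s2 →
      Disjoint
        ((univ.filter fun t : F ⊕ Unit => psi F δT δX c t s1 ≠ 0).image fun t => (t, s1))
        ((univ.filter fun t : F ⊕ Unit => psi F δT δX c t s2 ≠ 0).image fun t => (t, s2)) := by
    intro s1 _ s2 _ hne
    rw [Finset.disjoint_left]
    rintro ⟨t, s⟩ hm1 hm2
    rw [Finset.mem_image] at hm1 hm2
    obtain ⟨t1, -, he1⟩ := hm1
    obtain ⟨t2, -, he2⟩ := hm2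
    apply hne
    have e1 : s1 = s := congrArg Prod.snd he1
    have e2 : s2 = s := congrArg Prod.snd he2
    exact e1.trans e2.symm
  calc max (Fintype.card F + 1 - δX) 1 * max (Fintype.card F + 1 - δT) 1
      ≤ (univ.filter fun s : F ⊕ Unit => psi F δT δX c t0 s ≠ 0).card
          * max (Fintype.card F + 1 - δT) 1 := Nat.mul_le_mul_right _ hScard
    _ ≤ ∑ s ∈ (univ.filter fun s : F ⊕ Unit => psi F δT δX c t0 s ≠ 0),
          ((univ.filter fun t : F ⊕ Unit => psi F δT δX c t s ≠ 0).image
            fun t => (t, s)).card := by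
        rw [← smul_eq_mul]
        refine Finset.card_nsmul_le_sum _ _ _ fun s hsm => ?_
        rw [himg s]
        exact hrow s (Finset.mem_filter.mp hsm).2
    _ = ((univ.filter fun s : F ⊕ Unit => psi F δT δX c t0 s ≠ 0).biUnion
          fun s => (univ.filter fun t : F ⊕ Unit => psi F δT δX c t s ≠ 0).image
            fun t => (t, s)).card := (Finset.card_biUnion hdisj).symm
    _ ≤ (univ.filter fun p : (F ⊕ Unit) × (F ⊕ Unit) => psi F δT δX c p.1 p.2 ≠ 0).card := by
        refine Finset.card_le_card ?_
        intro x hx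
        rw [Finset.mem_biUnion] at hx
        obtain ⟨s, -, hxm⟩ := hx
        rw [Finset.mem_image] at hxm
        obtain ⟨t, htm, rfl⟩ := hxm
        rw [Finset.mem_filter] at htm ⊢
        exact ⟨mem_univ _, htm.2⟩

lemma code_wt_exact (δT δX : ℕ) :
    ∃ v ∈ Code F 0 (δT : ℤ) δX, v ≠ 0 ∧
      wt F v = max (Fintype.card F + 1 - δX) 1 * max (Fintype.card F + 1 - δT) 1 := by
  classical
  obtain ⟨uT, hT⟩ := rs_exact F δT
  obtain ⟨uX, hX⟩ := rs_exact F δX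
  set c : Fin (δT + 1) × Fin (δX + 1) → F := fun p => uT p.1 * uX p.2 with hc
  have hps : ∀ t s : F ⊕ Unit, psi F δT δX c t s
      = (∑ i, uT i * pw F δT t i) * (∑ j, uX j * pw F δX s j) := by
    intro t s
    rw [Finset.sum_mul_sum]
    unfold psi
    rw [Fintype.sum_prod_type]
    dsimp only
    exact Finset.sum_congr rfl fun i _ =>
      Finset.sum_congr rfl fun j _ => by simp only [hc]; ring
  have hwt : wt F (Psi F δT δX c : HIdx F → F)
      = max (Fintype.card F + 1 - δX) 1 * max (Fintype.card F + 1 - δT) 1 := by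
    rw [show (Psi F δT δX c : HIdx F → F)
        = fun idx => psi F δT δX c (toProd F idx).1 (toProd F idx).2 from rfl]
    rw [wt_eq_card]
    have hfeq : (univ.filter fun p : (F ⊕ Unit) × (F ⊕ Unit) => psi F δT δX c p.1 p.2 ≠ 0)
        = (univ.filter fun t : F ⊕ Unit => (∑ i, uT i * pw F δT t i) ≠ 0) ×ˢ
          (univ.filter fun s : F ⊕ Unit => (∑ j, uX j * pw F δX s j) ≠ 0) := by
      ext p
      rw [Finset.mem_product, Finset.mem_filter, Finset.mem_filter, Finset.mem_filter]
      constructor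
      · rintro ⟨-, hne⟩
        rw [hps] at hne
        exact ⟨⟨mem_univ _, left_ne_zero_of_mul hne⟩, ⟨mem_univ _, right_ne_zero_of_mul hne⟩⟩
      · rintro ⟨⟨-, hh1⟩, ⟨-, hh2⟩⟩
        exact ⟨mem_univ _, by rw [hps]; exact mul_ne_zero hh1 hh2⟩
    rw [hfeq, Finset.card_product, hT, hX]
    exact Nat.mul_comm _ _
  have hne : (Psi F δT δX c : HIdx F → F) ≠ 0 := by
    intro h0
    rw [h0] at hwt
    have hz : wt F (0 : HIdx F → F) = 0 := by simp [wt]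
    rw [hz] at hwt
    have hone : 1 * 1 ≤ max (Fintype.card F + 1 - δX) 1 * max (Fintype.card F + 1 - δT) 1 :=
      Nat.mul_le_mul (le_max_right _ _) (le_max_right _ _)
    omega
  exact ⟨Psi F δT δX c, Psi_mem_code F δT δX c, hne, hwt⟩

end Aux2

/-- for `η = 0`, `d_0(δT,δX) = max(q−δX+1,1)·max(q−δT+1,1)`. -/
theorem statement14 (δT δX : ℕ) :
    (dmin F 0 (δT : ℤ) δX : ℤ) =
      max ((Fintype.card F : ℤ) - δX + 1) 1 *
        max ((Fintype.card F : ℤ) - δT + 1) 1 := by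
  have key : dmin F 0 (δT : ℤ) δX
      = max (Fintype.card F + 1 - δX) 1 * max (Fintype.card F + 1 - δT) 1 := by
    obtain ⟨v, hvC, hv0, hwt⟩ := code_wt_exact F δT δX
    rw [dmin]
    refine le_antisymm (Nat.sInf_le ⟨v, hvC, hv0, hwt⟩)
      (le_csInf ⟨_, v, hvC, hv0, hwt⟩ ?_)
    rintro w ⟨v', hv'C, hv'0, rfl⟩
    exact code_wt_lb F δT δX v' hv'C hv'0
  rw [key, Nat.cast_mul]
  have h1 : ((max (Fintype.card F + 1 - δX) 1 : ℕ) : ℤ)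
      = max ((Fintype.card F : ℤ) - δX + 1) 1 := by omega
  have h2 : ((max (Fintype.card F + 1 - δT) 1 : ℕ) : ℤ)
      = max ((Fintype.card F : ℤ) - δT + 1) 1 := by omega
  rw [h1, h2]

end Hirz
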